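/- Let V be a finite set and c : V × V → [0,∞) a symmetric function with c(x) := Σ_{y∈V} c(x,y) > 0 for every x ∈ V, and set C = Σ_{x∈V} c(x). Let (X_k)_{k≥0} be the Markov chain with transition probabilities P(x,y) = c(x,y)/c(x), started from the stationary distribution π(x) = c(x)/C. For non-empty disjoint sets A, B ⊆ V, let E(A before B) denote the event that there exists k ≥ 1 with X_k ∈ B and X_j ∉ A for all 1 ≤ j ≤ k (the chain visits B strictly before returning to A). Then P(X_0 ∈ A and E(A before B)) = C_eff(A,B)/C. -/

import Mathlib

open scoped ENNReal
namespace Paper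
abbrev Vertex (m : ℕ → ℕ) (n : ℕ) := (i : Fin n) → Fin (m i)
variable {m : ℕ → ℕ}
def restr {n : ℕ} (w : Vertex m (n + 1)) : Vertex m n := fun i => w i.castSucc
def restrLe {n N : ℕ} (h : n ≤ N) (w : Vertex m N) : Vertex m n :=
  fun i => w ⟨i, lt_of_lt_of_le i.2 h⟩
def AutT (m : ℕ → ℕ) : Subgroup (∀ n, Equiv.Perm (Vertex m n)) where
  carrier := {g | ∀ (n : ℕ) (w : Vertex m (n + 1)), restr (g (n + 1) w) = g n (restr w)}
  one_mem' := by intro n w; rfl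
  mul_mem' := by
    intro a b ha hb n w
    show restr ((a (n+1)) ((b (n+1)) w)) = (a n) ((b n) (restr w))
    rw [ha, hb]
  inv_mem' := by
    intro a ha n w
    show restr ((a (n+1))⁻¹ w) = (a n)⁻¹ (restr w)
    apply (a n).injective
    have h1 := ha n ((a (n+1))⁻¹ w)
    simp only [Equiv.Perm.coe_inv, Equiv.apply_symm_apply] at h1
    exact h1.symm.trans ((a n).apply_symm_apply _).symm
def app {n : ℕ} (g : AutT m) (v : Vertex m n) : Vertex m n := g.val n v
theorem restrLe_app (g : AutT m) : ∀ {N n : ℕ} (h : n ≤ N) (w : Vertex m N),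
    restrLe h (g.val N w) = g.val n (restrLe h w) := by
  intro N
  induction N with
  | zero =>
    intro n h w
    have hn : n = 0 := Nat.le_zero.mp h
    subst hn; rfl
  | succ N ih =>
    intro n h w
    rcases Nat.eq_or_lt_of_le h with rfl | h'
    · rfl
    · have hN : n ≤ N := Nat.lt_succ_iff.mp h'
      calc restrLe h (g.val (N+1) w) = restrLe hN (restr (g.val (N+1) w)) := rfl
        _ = restrLe hN (g.val N (restr w)) := by rw [g.prop N w]
        _ = g.val n (restrLe hN (restr w)) := ih hN _
        _ = g.val n (restrLe h w) := rfl
abbrev shift (m : ℕ → ℕ) (n : ℕ) : ℕ → ℕ := fun i => m (n + i)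
def vappend {n k : ℕ} (v : Vertex (shift m n) k) (w : Vertex m n) : Vertex m (n + k) :=
  fun i => if h : (i : ℕ) < n then w ⟨i, h⟩
    else Fin.cast (congrArg m (by omega : n + ((i : ℕ) - n) = (i : ℕ)))
      (v ⟨(i : ℕ) - n, by omega⟩)
def topPart {n k : ℕ} (u : Vertex m (n + k)) : Vertex (shift m n) k :=
  fun i => u ⟨n + i, by omega⟩

theorem topPart_vappend {n k : ℕ} (v : Vertex (shift m n) k) (w : Vertex m n) :
    topPart (vappend v w) = v := by
  funext i
  simp only [topPart, vappend, Fin.val_mk]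
  rw [dif_neg (by omega)]
  apply Fin.ext
  simp only [Fin.coe_cast]
  exact congrArg (fun t : Fin k => (v t).1) (Fin.ext (by simp))

theorem restrLe_vappend {n k : ℕ} (v : Vertex (shift m n) k) (w : Vertex m n) :
    restrLe (Nat.le_add_right n k) (vappend v w) = w := by
  funext i
  simp only [restrLe, vappend, Fin.val_mk]
  rw [dif_pos i.2]

theorem vappend_topPart {n k : ℕ} (u : Vertex m (n + k)) :
    vappend (topPart u) (restrLe (Nat.le_add_right n k) u) = u := by
  funext i
  by_cases h : (i : ℕ) < n
  · simp only [vappend, restrLe]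
    rw [dif_pos h]
  · simp only [vappend, topPart, Fin.val_mk]
    rw [dif_neg h]
    apply Fin.ext
    simp only [Fin.coe_cast]
    exact congrArg (fun t : Fin (n+k) => (u t).1) (Fin.ext (by simp; omega))

theorem restr_vappend {n k : ℕ} (v : Vertex (shift m n) (k + 1)) (w : Vertex m n) :
    restr (n := n + k) (vappend (n := n) (k := k + 1) v w) = vappend (restr v) w := by
  funext i
  by_cases h : (i : ℕ) < n
  · show vappend v w (Fin.castSucc i) = vappend (restr v) w i
    simp only [vappend]
    rw [dif_pos (show ((Fin.castSucc i : Fin (n+k+1)) : ℕ) < n from h), dif_pos h]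
    rfl
  · show vappend v w (Fin.castSucc i) = vappend (restr v) w i
    simp only [vappend]
    rw [dif_neg (show ¬ ((Fin.castSucc i : Fin (n+k+1)) : ℕ) < n from h), dif_neg h]
    rfl

def secFun (g : AutT m) {n : ℕ} (w : Vertex m n) (k : ℕ)
    (v : Vertex (shift m n) k) : Vertex (shift m n) k :=
  topPart (g.val (n + k) (vappend v w))

theorem secFun_spec (g : AutT m) {n : ℕ} (w : Vertex m n) (k : ℕ)
    (v : Vertex (shift m n) k) :
    g.val (n + k) (vappend v w) = vappend (secFun g w k v) (g.val n w) := by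
  have h1 : restrLe (Nat.le_add_right n k) (g.val (n + k) (vappend v w)) = g.val n w := by
    rw [restrLe_app, restrLe_vappend]
  conv_lhs => rw [← vappend_topPart (g.val (n + k) (vappend v w))]
  rw [h1]
  rfl

theorem coe_inv_app (g : AutT m) (N : ℕ) (u : Vertex m N) :
    (g⁻¹ : AutT m).val N ((g : AutT m).val N u) = u := by
  have h : ((g⁻¹ : AutT m) : ∀ n, Equiv.Perm (Vertex m n)) = (↑g)⁻¹ := rfl
  rw [h]
  exact Equiv.symm_apply_apply (g.val N) u

theorem secFun_left_inv (g : AutT m) {n : ℕ} (w : Vertex m n) (k : ℕ)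
    (v : Vertex (shift m n) k) :
    secFun g⁻¹ (g.val n w) k (secFun g w k v) = v := by
  show topPart ((g⁻¹ : AutT m).val (n+k) (vappend (secFun g w k v) (g.val n w))) = v
  rw [← secFun_spec g w k v, coe_inv_app, topPart_vappend]

def sectionEquiv (g : AutT m) {n : ℕ} (w : Vertex m n) (k : ℕ) :
    Equiv.Perm (Vertex (shift m n) k) where
  toFun := secFun g w k
  invFun := secFun g⁻¹ (g.val n w) k
  left_inv v := secFun_left_inv g w k v
  right_inv v := by
    have h2 : (g⁻¹ : AutT m)⁻¹ = g := inv_inv g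
    have h3 : (g⁻¹ : AutT m).val n (g.val n w) = w := coe_inv_app g n w
    calc secFun g w k (secFun g⁻¹ (g.val n w) k v)
        = secFun (g⁻¹)⁻¹ ((g⁻¹ : AutT m).val n (g.val n w)) k
            (secFun g⁻¹ (g.val n w) k v) := by rw [h2, h3]
      _ = v := secFun_left_inv g⁻¹ (g.val n w) k v

theorem secFun_restr (g : AutT m) {n : ℕ} (w : Vertex m n) (k : ℕ)
    (v : Vertex (shift m n) (k + 1)) :
    restr (secFun g w (k + 1) v) = secFun g w k (restr v) := by
  show restr (topPart (g.val (n + (k+1)) (vappend v w)))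
      = topPart (g.val (n + k) (vappend (restr v) w))
  rw [← restr_vappend (n := n) (k := k) v w, ← g.prop (n + k) (vappend (n := n) (k := k + 1) v w)]
  rfl

/-- The section `g|_w` of a tree automorphism `g` at the level-`n` vertex `w`:
the unique automorphism of the shifted tree satisfying `(vw)·g = (v·g|_w)(w·g)`. -/
def sectionAut (g : AutT m) {n : ℕ} (w : Vertex m n) : AutT (shift m n) :=
  ⟨fun k => sectionEquiv g w k, fun k v => secFun_restr g w k v⟩


/-! ### Distinguished vertices and predicates -/

/-- The level-`n` vertex `0⋯0` on the `0`-ray. -/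
def rayV (hm : ∀ i, 0 < m i) (n : ℕ) : Vertex m n := fun i => ⟨0, hm i⟩

/-- The level-`(n+1)` neighbour `x0⋯0` of the `0`-ray: its only (possibly) non-zero
letter is the leading one, equal to `x`. -/
def nbrV (hm : ∀ i, 0 < m i) {n : ℕ} (x : Fin (m n)) : Vertex m (n + 1) :=
  fun i => if h : (i : ℕ) = n then Fin.cast (congrArg m h).symm x else ⟨0, hm i⟩

/-- The level-`n` vertex obtained from `w0` by prepending zeros. -/
def padZero (hm : ∀ i, 0 < m i) {n₀ : ℕ} (w0 : Vertex m n₀) (n : ℕ) : Vertex m n :=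
  fun i => if h : (i : ℕ) < n₀ then w0 ⟨i, h⟩ else ⟨0, hm i⟩

/-- The level-`(n+1)` vertex `x0⋯0w0`: the word `w0` at the bottom, the letter `x`
in the leading position, and zeros in between. -/
def padLead (hm : ∀ i, 0 < m i) {n₀ : ℕ} (w0 : Vertex m n₀) {n : ℕ} (x : Fin (m n)) :
    Vertex m (n + 1) :=
  fun i => if h : (i : ℕ) < n₀ then w0 ⟨i, h⟩
    else if h2 : (i : ℕ) = n then Fin.cast (congrArg m h2).symm x else ⟨0, hm i⟩

/-- `w` lies on the `0`-ray. -/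
def OnRay {n : ℕ} (w : Vertex m n) : Prop := ∀ i, (w i : ℕ) = 0

/-- `w` is a neighbour of the `0`-ray: its leading letter is non-zero and all other
letters are zero. -/
def IsNbr {n : ℕ} (w : Vertex m n) : Prop :=
  ∃ hn : 0 < n, (w ⟨n - 1, by omega⟩ : ℕ) ≠ 0 ∧
    ∀ i : Fin n, (i : ℕ) < n - 1 → (w i : ℕ) = 0

/-- A *rooted* automorphism: it permutes the first level and all its sections at
vertices of level `≥ 1` are trivial (i.e. it is an element of `Sym(X_{m_1})`). -/
def IsRooted (g : AutT m) : Prop :=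
  ∀ (n : ℕ) (w : Vertex m n), 0 < n → sectionAut g w = 1

/-- A *directed automorphism along the `0`-ray* (an element of `H_m̄`): it fixes the
`0`-ray, its sections away from the ray and its neighbours are trivial, and its
sections at neighbours of the ray are rooted. -/
def IsDirectedAut (g : AutT m) : Prop :=
  (∀ (n : ℕ) (w : Vertex m n), OnRay w → g.val n w = w) ∧
  (∀ (n : ℕ) (w : Vertex m n), ¬ OnRay w → ¬ IsNbr w → sectionAut g w = 1) ∧
  (∀ (n : ℕ) (w : Vertex m n), IsNbr w → IsRooted (sectionAut g w))

/-- The group `𝒜_n` of `n`-th level sections of `𝒜` along the `0`-ray. -/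
def Asub (hm : ∀ i, 0 < m i) (A : Subgroup (AutT m)) (n : ℕ) :
    Subgroup (AutT (shift m n)) :=
  Subgroup.closure {h | ∃ a ∈ A, h = sectionAut a (rayV hm n)}

/-- The group `ℬ_n` generated by the `n`-th level sections of `𝒜` at the neighbours
of the `0`-ray (trivial for `n = 0`, where there are no neighbours). -/
def Bsub (hm : ∀ i, 0 < m i) (A : Subgroup (AutT m)) : (n : ℕ) → Subgroup (AutT (shift m n))
  | 0 => ⊥
  | (k + 1) =>
    Subgroup.closure {h | ∃ a ∈ A, ∃ x : Fin (m k), (x : ℕ) ≠ 0 ∧ h = sectionAut a (nbrV hm x)}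

/-- The condition, for a word `w`, that position `i` is the position situated just
above the lowest non-zero letter of `w`. -/
def SpineCond {n : ℕ} (w : Vertex m n) (i : Fin n) : Prop :=
  ∃ p : Fin n, (w p : ℕ) ≠ 0 ∧ (∀ q : Fin n, (q : ℕ) < (p : ℕ) → (w q : ℕ) = 0) ∧
    (i : ℕ) = (p : ℕ) + 1

open Classical in
/-- The action of the spine-permutation automorphism `h_σ̄`: the letter just above
the lowest non-zero letter is permuted (by the permutation attached to its
alphabet size); all-zero words are fixed. -/
noncomputable def spineFun (σ : ∀ j : ℕ, Equiv.Perm (Fin j)) {n : ℕ} (w : Vertex m n) :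
    Vertex m n :=
  fun i => if SpineCond w i then (σ (m i)) (w i) else w i

/-! ### Probability measures, entropy, random walks -/

/-- `μ` is a probability measure (given by its density on a discrete group/set). -/
def IsProbMeas {G : Type*} (μ : G → ℝ) : Prop := (∀ g, 0 ≤ μ g) ∧ HasSum μ 1

/-- `μ` is symmetric. -/
def IsSymmMeas {G : Type*} [Group G] (μ : G → ℝ) : Prop := ∀ g, μ g⁻¹ = μ g

/-- Convolution of two measures on a discrete group. -/
noncomputable def conv {G : Type*} [Group G] (μ ν : G → ℝ) : G → ℝ :=
  fun g => ∑' h, μ h * ν (h⁻¹ * g)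

open Classical in
/-- `k`-fold convolution power `μ^{*k}` (with `μ^{*0} = δ_e`). -/
noncomputable def convPow {G : Type*} [Group G] (μ : G → ℝ) : ℕ → G → ℝ
  | 0 => fun g => if g = 1 then 1 else 0
  | (k + 1) => conv μ (convPow μ k)

/-- Shannon entropy `H(p) = -∑ p log p` of a discrete measure. -/
noncomputable def entropy {X : Type*} (p : X → ℝ) : ℝ := ∑' x, Real.negMulLog (p x)

/-- Shannon entropy, valued in `ℝ≥0∞`. -/
noncomputable def entropyE {X : Type*} (p : X → ℝ) : ℝ≥0∞ :=
  ∑' x, ENNReal.ofReal (Real.negMulLog (p x))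

/-- The Liouville property: every bounded `μ`-harmonic function is constant on the
subgroup generated by the support of `μ`. -/
def IsLiouville {G : Type*} [Group G] (μ : G → ℝ) : Prop :=
  ∀ f : G → ℝ, (∃ C, ∀ g, |f g| ≤ C) → (∀ g, f g = ∑' h, f (g * h) * μ h) →
    ∀ g ∈ Subgroup.closure (Function.support μ),
      ∀ h ∈ Subgroup.closure (Function.support μ), f g = f h

/-- The position of the right random walk after `t` steps, as a function of the
increments `s 0, s 1, …` (the group element `s_t ⋯ s_2 s_1`; with this convention,
applying it to a point `x` performs the corresponding right walk on any space the
group acts on from the right). -/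
def rwProd {G : Type*} [Group G] {k : ℕ} (s : Fin k → G) (t : ℕ) : G :=
  (((List.ofFn s).take t).reverse).prod

open Classical in
/-- The law of the pair (section/position) of the right `μ`-random walk observed at
the `j`-th visit of the trajectory `v·g_1, v·g_2, …` to the set `W`:
`visitLaw μ act v W sec j (h, u) = P(g at j-th visit has sec = h and position = u)`.
Here `act` is the (right) action used for the trajectory and `sec` the observable. -/
noncomputable def visitLaw {G X H : Type*} [Group G] (μ : G → ℝ)
    (act : G → X → X) (v : X) (W : Set X) (sec : G → H) (j : ℕ) : H × X → ℝ :=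
  fun p =>
    ∑' k : ℕ, ∑' s : Fin k → G,
      (∏ i, μ (s i)) *
        (if ((Finset.range k).filter fun t => act (rwProd s (t + 1)) v ∈ W).card = j
            ∧ act (rwProd s k) v ∈ W
            ∧ (sec (rwProd s k), act (rwProd s k) v) = p
          then 1 else 0)

/-! ### Electrical networks -/

/-- The Dirichlet energy of `f` with respect to the symmetric conductances `c`. -/
noncomputable def dirichlet {V : Type*} [Fintype V] (c : V → V → ℝ) (f : V → ℝ) : ℝ :=
  (1 / 2) * ∑ u : V, ∑ v : V, c u v * (f u - f v) ^ 2

/-- Effective conductance between the disjoint vertex sets `A` and `B`. -/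
noncomputable def effCond {V : Type*} [Fintype V] (c : V → V → ℝ) (A B : Set V) : ℝ :=
  sInf (dirichlet c '' {f | (∀ a ∈ A, f a = 1) ∧ (∀ b ∈ B, f b = 0)})

/-- Effective resistance between `A` and `B`, valued in `ℝ≥0∞` (infinite when the
effective conductance vanishes). -/
noncomputable def effResE {V : Type*} [Fintype V] (c : V → V → ℝ) (A B : Set V) : ℝ≥0∞ :=
  (ENNReal.ofReal (effCond c A B))⁻¹

open Classical in
/-- Conductances of the Schreier graph of the action on level `n` with (multi-)edges
given by a generating set: `c u v = #{s ∈ gens : u·s = v}` for `u ≠ v`. -/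
noncomputable def schreierCond (gens : Set (AutT m)) (n : ℕ) :
    Vertex m n → Vertex m n → ℝ :=
  fun u v => if u = v then 0 else (Set.ncard {s | s ∈ gens ∧ app s u = v} : ℝ)

open Classical in
/-- Conductances of the Schreier graph of the action on level `n`, with weights
`κ s` on the edge corresponding to the generator `s`. -/
noncomputable def schreierCondWt (S : Finset (AutT m)) (κ : AutT m → ℝ) (n : ℕ) :
    Vertex m n → Vertex m n → ℝ :=
  fun u v => if u = v then 0 else ∑ s ∈ S.filter (fun s => app s u = v), κ s

/-- The set `𝔸_n` of level-`n` vertices where some generator `s ∈ S` has a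
non-trivial section lying in `𝒜_n`. -/
def ASet (hm : ∀ i, 0 < m i) (A : Subgroup (AutT m)) (S : Finset (AutT m)) (n : ℕ) :
    Set (Vertex m n) :=
  {w | ∃ s ∈ S, sectionAut s w ∈ Asub hm A n ∧ sectionAut s w ≠ 1}

/-- The set `𝔹_n` of level-`n` vertices where some generator `s ∈ S` has a
non-trivial section lying in `ℬ_n`. -/
def BSet (hm : ∀ i, 0 < m i) (A : Subgroup (AutT m)) (S : Finset (AutT m)) (n : ℕ) :
    Set (Vertex m n) :=
  {w | ∃ s ∈ S, sectionAut s w ∈ Bsub hm A n ∧ sectionAut s w ≠ 1}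

/-- The orbit of a level-`n` vertex under a subgroup `G ≤ Aut(T_m)`. -/
def orbitOf (G : Subgroup (AutT m)) {n : ℕ} (v : Vertex m n) : Set (Vertex m n) :=
  {u | ∃ g : AutT m, g ∈ G ∧ app g v = u}

/-! ### Regular trees and automata -/

/-- The constant valency sequence (regular rooted tree `T_mm`). -/
abbrev constSeq (mm : ℕ) : ℕ → ℕ := fun _ => mm


/-- An invertible automaton over the alphabet of a regular tree: a finite set of
automorphisms closed under taking sections at one-letter words. -/
def IsAutomaton {mm : ℕ} (A : Finset (AutT (constSeq mm))) : Prop :=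
  ∀ a ∈ A, ∀ x : Vertex (constSeq mm) 1, sectionAut a x ∈ A

/-- Bounded activity: for every state `a`, the number of level-`n` words with
non-trivial section is bounded uniformly in `n`. -/
def IsBoundedActivity {mm : ℕ} (A : Finset (AutT (constSeq mm))) : Prop :=
  ∀ a ∈ A, ∃ B : ℕ, ∀ n : ℕ,
    Set.ncard {w : Vertex (constSeq mm) n | sectionAut a w ≠ 1} ≤ B

/-- Word length with respect to a finite symmetric generating set. -/
noncomputable def wordLen {G : Type*} [Group G] (S : Set G) (g : G) : ℕ :=
  sInf {k | ∃ l : List G, l.length = k ∧ (∀ s ∈ l, s ∈ S) ∧ l.prod = g}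


section StatAux
variable {V : Type*} [Fintype V]

open Classical in
noncomputable def statV (c : V → V → ℝ) (A B : Set V) : ℕ → V → ℝ
  | 0 => fun y => if y ∈ B then 1 else 0
  | (ℓ+1) => fun y => if y ∈ A ∨ y ∈ B then 0
      else ∑ z, (c y z / ∑ w, c y w) * statV c A B ℓ z

variable {c : V → V → ℝ} {A B : Set V}

open Classical in
lemma statV_nonneg (hnn : ∀ x y, 0 ≤ c x y) : ∀ ℓ y, 0 ≤ statV c A B ℓ y := by
  intro ℓ
  induction ℓ with
  | zero => intro y; simp only [statV]; positivity
  | succ ℓ ih =>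
    intro y
    simp only [statV]
    split
    · exact le_rfl
    · exact Finset.sum_nonneg fun z _ => mul_nonneg
        (div_nonneg (hnn y z) (Finset.sum_nonneg fun w _ => hnn y w)) (ih z)

open Classical in
lemma statV_sum_range_le (hnn : ∀ x y, 0 ≤ c x y) (hpos : ∀ x, 0 < ∑ y, c x y) :
    ∀ L y, ∑ ℓ ∈ Finset.range L, statV c A B ℓ y ≤ 1 := by
  intro L
  induction L with
  | zero => intro y; simp
  | succ L ih =>
    intro y
    rw [Finset.sum_range_succ']
    by_cases hy : y ∈ A ∨ y ∈ B
    · have h1 : ∀ ℓ, statV c A B (ℓ + 1) y = 0 := by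
        intro ℓ; simp only [statV, if_pos hy]
      simp only [h1, Finset.sum_const_zero, zero_add]
      show (if y ∈ B then (1:ℝ) else 0) ≤ 1
      split <;> norm_num
    · have h0 : statV c A B 0 y = 0 := by
        simp only [statV, if_neg (fun hb => hy (Or.inr hb))]
      have h1 : ∀ ℓ, statV c A B (ℓ + 1) y
          = ∑ z, (c y z / ∑ w, c y w) * statV c A B ℓ z := by
        intro ℓ; simp only [statV, if_neg hy]
      simp only [h1, h0, add_zero]
      rw [Finset.sum_comm]
      calc ∑ z, ∑ ℓ ∈ Finset.range L, (c y z / ∑ w, c y w) * statV c A B ℓ z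
          = ∑ z, (c y z / ∑ w, c y w) * ∑ ℓ ∈ Finset.range L, statV c A B ℓ z := by
            simp [Finset.mul_sum]
        _ ≤ ∑ z, (c y z / ∑ w, c y w) * 1 := by
            apply Finset.sum_le_sum
            intro z _
            exact mul_le_mul_of_nonneg_left (ih z)
              (div_nonneg (hnn y z) (le_of_lt (hpos y)))
        _ = 1 := by
            simp only [mul_one]
            rw [← Finset.sum_div, div_self (ne_of_gt (hpos y))]

lemma statV_summable (hnn : ∀ x y, 0 ≤ c x y) (hpos : ∀ x, 0 < ∑ y, c x y) (y : V) :
    Summable (fun ℓ => statV c A B ℓ y) :=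
  summable_of_sum_range_le (fun ℓ => statV_nonneg hnn ℓ y)
    (fun L => statV_sum_range_le hnn hpos L y)

noncomputable def hitP (c : V → V → ℝ) (A B : Set V) (y : V) : ℝ :=
  ∑' ℓ, statV c A B ℓ y

open Classical in
lemma hitP_A (hAB : Disjoint A B) {y : V} (hy : y ∈ A) : hitP c A B y = 0 := by
  have : ∀ ℓ, statV c A B ℓ y = 0 := by
    intro ℓ
    cases ℓ with
    | zero => simp only [statV, if_neg (Set.disjoint_left.mp hAB hy)]
    | succ ℓ => simp only [statV, if_pos (Or.inl hy)]
  simp [hitP, this]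

open Classical in
lemma hitP_B {y : V} (hy : y ∈ B) : hitP c A B y = 1 := by
  have h := tsum_eq_single (L := SummationFilter.unconditional ℕ) (f := fun ℓ => statV c A B ℓ y) 0 (by
    intro ℓ hℓ
    cases ℓ with
    | zero => exact absurd rfl hℓ
    | succ ℓ => simp only [statV, if_pos (Or.inr hy)])
  rw [hitP, h]
  simp only [statV, if_pos hy]

open Classical in
lemma hitP_harm (hnn : ∀ x y, 0 ≤ c x y) (hpos : ∀ x, 0 < ∑ y, c x y)
    {y : V} (hy : ¬(y ∈ A ∨ y ∈ B)) :
    hitP c A B y = ∑ z, (c y z / ∑ w, c y w) * hitP c A B z := by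
  rw [hitP, Summable.tsum_eq_zero_add (statV_summable hnn hpos y)]
  have h0 : statV c A B 0 y = 0 := by
    simp only [statV, if_neg (fun hb => hy (Or.inr hb))]
  have h1 : ∀ ℓ, statV c A B (ℓ + 1) y
      = ∑ z, (c y z / ∑ w, c y w) * statV c A B ℓ z := by
    intro ℓ; simp only [statV, if_neg hy]
  simp only [h0, h1, zero_add]
  rw [Summable.tsum_finsetSum (fun z _ => Summable.mul_left _ (statV_summable hnn hpos z))]
  congr 1
  funext z
  exact tsum_mul_left


open Classical in
noncomputable def pw (c : V → V → ℝ) (A B : Set V) (ℓ : ℕ) (x : Fin (ℓ+1) → V) : ℝ :=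
  (if (∀ i : Fin (ℓ+1), (i:ℕ) < ℓ → x i ∉ A ∧ x i ∉ B) ∧ x (Fin.last ℓ) ∈ B then 1 else 0) *
    ∏ i : Fin ℓ, c (x i.castSucc) (x i.succ) / (∑ y, c (x i.castSucc) y)

open Classical in
lemma ind_and (p q : Prop) :
    (if p ∧ q then (1:ℝ) else 0) = (if p then 1 else 0) * (if q then 1 else 0) := by
  by_cases hp : p <;> by_cases hq : q <;> simp [hp, hq]

open Classical in
lemma pw_cons (c : V → V → ℝ) (A B : Set V) (ℓ : ℕ) (y : V) (x : Fin (ℓ+1) → V) :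
    pw c A B (ℓ+1) (Fin.cons (α := fun _ => V) y x)
      = (if y ∉ A ∧ y ∉ B then 1 else 0) * ((c y (x 0) / ∑ w, c y w) * pw c A B ℓ x) := by
  unfold pw
  have hcond : ((∀ i : Fin (ℓ+2), (i:ℕ) < ℓ+1 → Fin.cons (α := fun _ => V) y x i ∉ A ∧ Fin.cons (α := fun _ => V) y x i ∉ B)
        ∧ Fin.cons (α := fun _ => V) y x (Fin.last (ℓ+1)) ∈ B)
      ↔ (y ∉ A ∧ y ∉ B) ∧
        ((∀ i : Fin (ℓ+1), (i:ℕ) < ℓ → x i ∉ A ∧ x i ∉ B) ∧ x (Fin.last ℓ) ∈ B) := by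
    constructor
    · rintro ⟨h1, h2⟩
      refine ⟨h1 0 (by simp), fun i hi => ?_, ?_⟩
      · have := h1 i.succ (by simpa using Nat.succ_lt_succ hi)
        simpa using this
      · have : Fin.last (ℓ+1) = (Fin.last ℓ).succ := rfl
        rw [this, Fin.cons_succ] at h2
        exact h2
    · rintro ⟨hy, h1, h2⟩
      constructor
      · intro i hi
        rcases Fin.eq_zero_or_eq_succ i with rfl | ⟨j, rfl⟩
        · simpa using hy
        · rw [Fin.cons_succ]
          exact h1 j (by simpa using Nat.lt_of_succ_lt_succ hi)
      · have : Fin.last (ℓ+1) = (Fin.last ℓ).succ := rfl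
        rw [this, Fin.cons_succ]
        exact h2
  have hprod : (∏ i : Fin (ℓ+1), c (Fin.cons (α := fun _ => V) y x i.castSucc) (Fin.cons (α := fun _ => V) y x i.succ)
        / (∑ w, c (Fin.cons (α := fun _ => V) y x i.castSucc) w))
      = (c y (x 0) / ∑ w, c y w)
        * ∏ i : Fin ℓ, c (x i.castSucc) (x i.succ) / (∑ w, c (x i.castSucc) w) := by
    rw [Fin.prod_univ_succ]
    congr 1
  rw [if_congr hcond rfl rfl, hprod]
  by_cases h1 : y ∉ A ∧ y ∉ B <;>
    by_cases h2 : (∀ i : Fin (ℓ+1), (i:ℕ) < ℓ → x i ∉ A ∧ x i ∉ B) ∧ x (Fin.last ℓ) ∈ B <;>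
    simp [h1, h2] <;> ring

open Classical in
lemma pw_sum (c : V → V → ℝ) (A B : Set V) :
    ∀ (ℓ : ℕ) (g : V → ℝ),
      ∑ x : Fin (ℓ+1) → V, g (x 0) * pw c A B ℓ x = ∑ y, g y * statV c A B ℓ y := by
  intro ℓ
  induction ℓ with
  | zero =>
    intro g
    rw [← Equiv.sum_comp (Equiv.funUnique (Fin 1) V).symm
      (fun x : Fin 1 → V => g (x 0) * pw c A B 0 x)]
    apply Finset.sum_congr rfl
    intro y _
    have : pw c A B 0 ((Equiv.funUnique (Fin 1) V).symm y)
        = if y ∈ B then 1 else 0 := by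
      unfold pw
      simp [Fin.last]
    rw [this]
    simp only [statV]
    rfl
  | succ ℓ ih =>
    intro g
    rw [← Equiv.sum_comp (Fin.consEquiv (fun _ : Fin (ℓ+2) => V))
      (fun x : Fin (ℓ+2) → V => g (x 0) * pw c A B (ℓ+1) x)]
    rw [Fintype.sum_prod_type]
    have step : ∀ y : V, (∑ x : Fin (ℓ+1) → V,
          g ((Fin.consEquiv (fun _ : Fin (ℓ+2) => V)) (y, x) 0)
            * pw c A B (ℓ+1) ((Fin.consEquiv (fun _ : Fin (ℓ+2) => V)) (y, x)))
        = g y * statV c A B (ℓ+1) y := by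
      intro y
      have hco : ∀ x : Fin (ℓ+1) → V,
          (Fin.consEquiv (fun _ : Fin (ℓ+2) => V)) (y, x) = Fin.cons (α := fun _ => V) y x := fun _ => rfl
      simp only [hco, Fin.cons_zero, pw_cons]
      rw [← Finset.mul_sum]
      congr 1
      by_cases hy : y ∈ A ∨ y ∈ B
      · have : (y ∉ A ∧ y ∉ B) = False := by
          simp only [eq_iff_iff, iff_false]
          tauto
        simp only [this, if_false, zero_mul, Finset.sum_const_zero]
        simp only [statV, if_pos hy]
      · have : (y ∉ A ∧ y ∉ B) = True := by
          simp only [eq_iff_iff, iff_true]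
          tauto
        simp only [this, if_true, one_mul]
        have := ih (fun z => c y z / ∑ w, c y w)
        calc ∑ x : Fin (ℓ+1) → V, (c y (x 0) / ∑ w, c y w) * pw c A B ℓ x
            = ∑ z, (c y z / ∑ w, c y w) * statV c A B ℓ z := this
          _ = statV c A B (ℓ+1) y := by simp only [statV, if_neg hy]
    exact Finset.sum_congr rfl (fun y _ => step y)


lemma cross_eq {c : V → V → ℝ} (hsym : ∀ x y, c x y = c y x) (f d : V → ℝ) :
    ∑ u, ∑ v, c u v * ((f u - f v) * (d u - d v))
      = 2 * ∑ u, d u * ∑ v, c u v * (f u - f v) := by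
  have key : ∑ u, ∑ v, c u v * (f u - f v) * d v
      = - ∑ u, ∑ v, c u v * (f u - f v) * d u := by
    calc ∑ u, ∑ v, c u v * (f u - f v) * d v
        = ∑ v, ∑ u, c u v * (f u - f v) * d v := Finset.sum_comm
      _ = ∑ u, ∑ v, -(c u v * (f u - f v) * d u) := by
          apply Finset.sum_congr rfl; intro u _
          apply Finset.sum_congr rfl; intro v _
          rw [hsym v u]; ring
      _ = - ∑ u, ∑ v, c u v * (f u - f v) * d u := by
          simp [Finset.sum_neg_distrib]
  calc ∑ u, ∑ v, c u v * ((f u - f v) * (d u - d v))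
      = ∑ u, ∑ v, (c u v * (f u - f v) * d u - c u v * (f u - f v) * d v) := by
        apply Finset.sum_congr rfl; intro u _
        apply Finset.sum_congr rfl; intro v _
        ring
    _ = (∑ u, ∑ v, c u v * (f u - f v) * d u) - ∑ u, ∑ v, c u v * (f u - f v) * d v := by
        simp [Finset.sum_sub_distrib]
    _ = 2 * ∑ u, ∑ v, c u v * (f u - f v) * d u := by rw [key]; ring
    _ = 2 * ∑ u, d u * ∑ v, c u v * (f u - f v) := by
        congr 1
        apply Finset.sum_congr rfl; intro u _
        rw [Finset.mul_sum]
        apply Finset.sum_congr rfl; intro v _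
        ring

lemma dirichlet_eq_phi {c : V → V → ℝ} (hsym : ∀ x y, c x y = c y x) (f : V → ℝ) :
    dirichlet c f = ∑ u, f u * ∑ v, c u v * (f u - f v) := by
  unfold dirichlet
  have : ∑ u, ∑ v, c u v * (f u - f v) ^ 2
      = ∑ u, ∑ v, c u v * ((f u - f v) * (f u - f v)) := by
    apply Finset.sum_congr rfl; intro u _
    apply Finset.sum_congr rfl; intro v _
    ring
  rw [this, cross_eq hsym f f]
  ring

lemma dirichlet_nonneg {c : V → V → ℝ} (hnn : ∀ x y, 0 ≤ c x y) (f : V → ℝ) :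
    0 ≤ dirichlet c f := by
  unfold dirichlet
  have : (0:ℝ) ≤ ∑ u, ∑ v, c u v * (f u - f v) ^ 2 :=
    Finset.sum_nonneg fun u _ => Finset.sum_nonneg fun v _ =>
      mul_nonneg (hnn u v) (sq_nonneg _)
  linarith


section Harm
variable {c : V → V → ℝ} {A B : Set V}

noncomputable def fful (c : V → V → ℝ) (A B : Set V) : V → ℝ :=
  fun y => 1 - hitP c A B y

lemma phi_zero (hnn : ∀ x y, 0 ≤ c x y) (hpos : ∀ x, 0 < ∑ y, c x y)
    {u : V} (hu : ¬(u ∈ A ∨ u ∈ B)) :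
    ∑ v, c u v * (fful c A B u - fful c A B v) = 0 := by
  have harm := hitP_harm (A := A) (B := B) hnn hpos hu
  have hmul : (∑ w, c u w) * hitP c A B u = ∑ v, c u v * hitP c A B v := by
    rw [harm, Finset.mul_sum]
    apply Finset.sum_congr rfl; intro v _
    have h0 : (∑ w : V, c u w) ≠ 0 := ne_of_gt (hpos u)
    field_simp
  have expand : ∑ v, c u v * (fful c A B u - fful c A B v)
      = (∑ v, c u v * hitP c A B v) - (∑ w, c u w) * hitP c A B u := by
    unfold fful
    rw [Finset.sum_mul]
    rw [← Finset.sum_sub_distrib]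
    apply Finset.sum_congr rfl; intro v _
    ring
  rw [expand, ← hmul, sub_self]

open Classical in
lemma dirichlet_fful (hsym : ∀ x y, c x y = c y x) (hnn : ∀ x y, 0 ≤ c x y)
    (hpos : ∀ x, 0 < ∑ y, c x y) (hAB : Disjoint A B) :
    dirichlet c (fful c A B)
      = ∑ u, (if u ∈ A then (1:ℝ) else 0) * ∑ v, c u v * hitP c A B v := by
  classical
  rw [dirichlet_eq_phi hsym]
  apply Finset.sum_congr rfl; intro u _
  by_cases hu : u ∈ A
  · rw [if_pos hu]
    have h1 : fful c A B u = 1 := by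
      unfold fful; rw [hitP_A hAB hu, sub_zero]
    rw [h1, one_mul, one_mul]
    apply Finset.sum_congr rfl; intro v _
    have : 1 - fful c A B v = hitP c A B v := by
      unfold fful; ring
    rw [this]
  · rw [if_neg hu, zero_mul]
    by_cases hb : u ∈ B
    · have h0 : fful c A B u = 0 := by
        unfold fful; rw [hitP_B hb, sub_self]
      rw [h0, zero_mul]
    · rw [phi_zero hnn hpos (by tauto), mul_zero]

lemma effCond_eq_fful (hsym : ∀ x y, c x y = c y x) (hnn : ∀ x y, 0 ≤ c x y)
    (hpos : ∀ x, 0 < ∑ y, c x y) (hAB : Disjoint A B) :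
    effCond c A B = dirichlet c (fful c A B) := by
  classical
  have hmem : dirichlet c (fful c A B)
      ∈ dirichlet c '' {f | (∀ a ∈ A, f a = 1) ∧ (∀ b ∈ B, f b = 0)} := by
    refine ⟨fful c A B, ⟨?_, ?_⟩, rfl⟩
    · intro a ha; unfold fful; rw [hitP_A hAB ha, sub_zero]
    · intro b hb; unfold fful; rw [hitP_B hb, sub_self]
  have hlb : ∀ r ∈ dirichlet c '' {f | (∀ a ∈ A, f a = 1) ∧ (∀ b ∈ B, f b = 0)},
      dirichlet c (fful c A B) ≤ r := by
    rintro r ⟨g, ⟨hgA, hgB⟩, rfl⟩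
    set f := fful c A B with hf
    set d := fun u => g u - f u with hd
    have hdz : ∀ u, u ∈ A ∨ u ∈ B → d u = 0 := by
      intro u hu
      rcases hu with hu | hu
      · have : f u = 1 := by rw [hf]; unfold fful; rw [hitP_A hAB hu, sub_zero]
        simp [hd, hgA u hu, this]
      · have : f u = 0 := by rw [hf]; unfold fful; rw [hitP_B hu, sub_self]
        simp [hd, hgB u hu, this]
    have hcross : ∑ u, ∑ v, c u v * ((f u - f v) * (d u - d v)) = 0 := by
      rw [cross_eq hsym f d]
      have : ∑ u, d u * ∑ v, c u v * (f u - f v) = 0 := by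
        apply Finset.sum_eq_zero
        intro u _
        by_cases hu : u ∈ A ∨ u ∈ B
        · rw [hdz u hu, zero_mul]
        · rw [phi_zero hnn hpos hu, mul_zero]
      rw [this, mul_zero]
    have hsplit : dirichlet c g = dirichlet c f + dirichlet c d
        + ∑ u, ∑ v, c u v * ((f u - f v) * (d u - d v)) := by
      have hg : ∀ u, g u = f u + d u := by intro u; simp [hd]
      have hsum : ∑ u, ∑ v, c u v * (g u - g v)^2
          = ∑ u, ∑ v, (c u v * (f u - f v)^2 + c u v * (d u - d v)^2
              + c u v * ((f u - f v) * (d u - d v)) * 2) := by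
        apply Finset.sum_congr rfl; intro u _
        apply Finset.sum_congr rfl; intro v _
        rw [hg u, hg v]; ring
      unfold dirichlet
      rw [hsum]
      simp only [Finset.sum_add_distrib]
      have h3 : ∑ u : V, ∑ v : V, (c u v * ((f u - f v) * (d u - d v)) * 2)
          = (∑ u : V, ∑ v : V, c u v * ((f u - f v) * (d u - d v))) * 2 := by
        simp only [← Finset.sum_mul]
      rw [h3]
      ring
    rw [hsplit, hcross]
    have := dirichlet_nonneg (c := c) hnn d
    linarith
  rw [effCond, IsLeast.csInf_eq ⟨hmem, hlb⟩]

end Harm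

lemma prod_cons (c : V → V → ℝ) (ℓ : ℕ) (y : V) (x : Fin (ℓ+1) → V) :
    (∏ i : Fin (ℓ+1), c (Fin.cons (α := fun _ => V) y x i.castSucc)
          (Fin.cons (α := fun _ => V) y x i.succ)
        / (∑ w, c (Fin.cons (α := fun _ => V) y x i.castSucc) w))
      = (c y (x 0) / ∑ w, c y w)
        * ∏ i : Fin ℓ, c (x i.castSucc) (x i.succ) / (∑ w, c (x i.castSucc) w) := by
  rw [Fin.prod_univ_succ]
  congr 1

open Classical in
lemma step_sum {c : V → V → ℝ} {A B : Set V} (hpos : ∀ x, 0 < ∑ y, c x y) (ℓ : ℕ) :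
    ∑ x : Fin (ℓ + 2) → V,
        (if x 0 ∈ A
            ∧ (∀ j : Fin (ℓ + 2), 0 < (j : ℕ) → (j : ℕ) < ℓ + 1 → x j ∉ A ∧ x j ∉ B)
            ∧ x (Fin.last (ℓ + 1)) ∈ B
          then (1 : ℝ) else 0) *
          ((∑ y, c (x 0) y) / (∑ z, ∑ y, c z y)) *
          ∏ i : Fin (ℓ + 1), c (x i.castSucc) (x i.succ) / (∑ y, c (x i.castSucc) y)
      = (∑ a, (if a ∈ A then (1:ℝ) else 0) * ∑ y, c a y * statV c A B ℓ y)
          / (∑ z, ∑ y, c z y) := by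
  rw [← Equiv.sum_comp (Fin.consEquiv (fun _ : Fin (ℓ+2) => V))]
  rw [Fintype.sum_prod_type]
  have main : ∀ a : V,
      (∑ x' : Fin (ℓ+1) → V,
        (if (Fin.consEquiv (fun _ : Fin (ℓ+2) => V)) (a, x') 0 ∈ A
            ∧ (∀ j : Fin (ℓ + 2), 0 < (j : ℕ) → (j : ℕ) < ℓ + 1 →
                (Fin.consEquiv (fun _ : Fin (ℓ+2) => V)) (a, x') j ∉ A
                  ∧ (Fin.consEquiv (fun _ : Fin (ℓ+2) => V)) (a, x') j ∉ B)
            ∧ (Fin.consEquiv (fun _ : Fin (ℓ+2) => V)) (a, x') (Fin.last (ℓ + 1)) ∈ B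
          then (1 : ℝ) else 0) *
          ((∑ y, c ((Fin.consEquiv (fun _ : Fin (ℓ+2) => V)) (a, x') 0) y)
              / (∑ z, ∑ y, c z y)) *
          ∏ i : Fin (ℓ + 1),
            c ((Fin.consEquiv (fun _ : Fin (ℓ+2) => V)) (a, x') i.castSucc)
                ((Fin.consEquiv (fun _ : Fin (ℓ+2) => V)) (a, x') i.succ)
              / (∑ y, c ((Fin.consEquiv (fun _ : Fin (ℓ+2) => V)) (a, x') i.castSucc) y))
      = ((if a ∈ A then (1:ℝ) else 0) * ∑ y, c a y * statV c A B ℓ y)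
          / (∑ z, ∑ y, c z y) := by
    intro a
    have hco : ∀ x' : Fin (ℓ+1) → V,
        (Fin.consEquiv (fun _ : Fin (ℓ+2) => V)) (a, x')
          = Fin.cons (α := fun _ => V) a x' := fun _ => rfl
    have hcond : ∀ x' : Fin (ℓ+1) → V,
        (Fin.cons (α := fun _ => V) a x' 0 ∈ A
            ∧ (∀ j : Fin (ℓ + 2), 0 < (j : ℕ) → (j : ℕ) < ℓ + 1 →
                Fin.cons (α := fun _ => V) a x' j ∉ A
                  ∧ Fin.cons (α := fun _ => V) a x' j ∉ B)
            ∧ Fin.cons (α := fun _ => V) a x' (Fin.last (ℓ + 1)) ∈ B)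
        ↔ (a ∈ A ∧
            ((∀ i : Fin (ℓ+1), (i:ℕ) < ℓ → x' i ∉ A ∧ x' i ∉ B)
              ∧ x' (Fin.last ℓ) ∈ B)) := by
      intro x'
      constructor
      · rintro ⟨h0, h1, h2⟩
        refine ⟨h0, fun i hi => ?_, ?_⟩
        · have := h1 i.succ (by simp) (by simpa using Nat.succ_lt_succ hi)
          simpa using this
        · have hl : Fin.last (ℓ+1) = (Fin.last ℓ).succ := rfl
          rw [hl, Fin.cons_succ] at h2
          exact h2
      · rintro ⟨h0, h1, h2⟩
        refine ⟨h0, ?_, ?_⟩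
        · intro j hj1 hj2
          rcases Fin.eq_zero_or_eq_succ j with rfl | ⟨i, rfl⟩
          · simp at hj1
          · rw [Fin.cons_succ]
            exact h1 i (by simpa using Nat.lt_of_succ_lt_succ hj2)
        · have hl : Fin.last (ℓ+1) = (Fin.last ℓ).succ := rfl
          rw [hl, Fin.cons_succ]
          exact h2
    have hterm : ∀ x' : Fin (ℓ+1) → V,
        (if (Fin.cons (α := fun _ => V) a x' 0 ∈ A
            ∧ (∀ j : Fin (ℓ + 2), 0 < (j : ℕ) → (j : ℕ) < ℓ + 1 →
                Fin.cons (α := fun _ => V) a x' j ∉ A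
                  ∧ Fin.cons (α := fun _ => V) a x' j ∉ B)
            ∧ Fin.cons (α := fun _ => V) a x' (Fin.last (ℓ + 1)) ∈ B)
          then (1:ℝ) else 0) *
          ((∑ y, c (Fin.cons (α := fun _ => V) a x' 0) y) / (∑ z, ∑ y, c z y)) *
          ∏ i : Fin (ℓ + 1),
            c (Fin.cons (α := fun _ => V) a x' i.castSucc)
                (Fin.cons (α := fun _ => V) a x' i.succ)
              / (∑ y, c (Fin.cons (α := fun _ => V) a x' i.castSucc) y)
        = (if a ∈ A then (1:ℝ) else 0) * ((∑ y, c a y) / (∑ z, ∑ y, c z y))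
            * ((1 / ∑ w, c a w) * (c a (x' 0) * pw c A B ℓ x')) := by
      intro x'
      rw [if_congr (hcond x') rfl rfl, prod_cons]
      have hc0 : Fin.cons (α := fun _ => V) a x' 0 = a := rfl
      rw [hc0]
      unfold pw
      by_cases h1 : a ∈ A <;>
        by_cases h2 : (∀ i : Fin (ℓ+1), (i:ℕ) < ℓ → x' i ∉ A ∧ x' i ∉ B)
            ∧ x' (Fin.last ℓ) ∈ B <;>
        simp [h1, h2] <;> ring
    simp only [hco]
    rw [Finset.sum_congr rfl (fun x' _ => hterm x')]
    rw [← Finset.mul_sum, ← Finset.mul_sum]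
    rw [pw_sum c A B ℓ (fun z => c a z)]
    have hca : (∑ w, c a w) ≠ 0 := ne_of_gt (hpos a)
    have : (∑ y, c a y) / (∑ z, ∑ y, c z y) * ((1 / ∑ w, c a w) * ∑ y, c a y * statV c A B ℓ y)
        = (∑ y, c a y * statV c A B ℓ y) / (∑ z, ∑ y, c z y) := by
      calc (∑ y, c a y) / (∑ z, ∑ y, c z y)
            * ((1 / ∑ w, c a w) * ∑ y, c a y * statV c A B ℓ y)
          = ((∑ y, c a y) * (1 / ∑ y, c a y))
              * ((∑ y, c a y * statV c A B ℓ y) / (∑ z, ∑ y, c z y)) := by ring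
        _ = (∑ y, c a y * statV c A B ℓ y) / (∑ z, ∑ y, c z y) := by
            rw [mul_one_div, div_self hca, one_mul]
    rw [mul_assoc, this, mul_div_assoc]
  rw [Finset.sum_congr rfl (fun a _ => main a), ← Finset.sum_div]

open Classical in
theorem stationary_escape_prob_aux {c : V → V → ℝ}
    (hsym : ∀ x y, c x y = c y x) (hnn : ∀ x y, 0 ≤ c x y)
    (hpos : ∀ x, 0 < ∑ y, c x y)
    (A B : Set V) (hA : A.Nonempty) (hB : B.Nonempty) (hAB : Disjoint A B) :
    (∑' ℓ : ℕ, ∑ x : Fin (ℓ + 2) → V,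
        (if x 0 ∈ A
            ∧ (∀ j : Fin (ℓ + 2), 0 < (j : ℕ) → (j : ℕ) < ℓ + 1 → x j ∉ A ∧ x j ∉ B)
            ∧ x (Fin.last (ℓ + 1)) ∈ B
          then (1 : ℝ) else 0) *
          ((∑ y, c (x 0) y) / (∑ z, ∑ y, c z y)) *
          ∏ i : Fin (ℓ + 1), c (x i.castSucc) (x i.succ) / (∑ y, c (x i.castSucc) y))
      = effCond c A B / (∑ z, ∑ y, c z y) := by
  have hsummy : ∀ y : V, Summable (fun ℓ => statV c A B ℓ y) :=
    fun y => statV_summable hnn hpos y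
  have hsumin : ∀ a : V, Summable (fun ℓ => ∑ y, c a y * statV c A B ℓ y) :=
    fun a => summable_sum (fun y _ => (hsummy y).mul_left (c a y))
  calc (∑' ℓ : ℕ, ∑ x : Fin (ℓ + 2) → V,
        (if x 0 ∈ A
            ∧ (∀ j : Fin (ℓ + 2), 0 < (j : ℕ) → (j : ℕ) < ℓ + 1 → x j ∉ A ∧ x j ∉ B)
            ∧ x (Fin.last (ℓ + 1)) ∈ B
          then (1 : ℝ) else 0) *
          ((∑ y, c (x 0) y) / (∑ z, ∑ y, c z y)) *
          ∏ i : Fin (ℓ + 1), c (x i.castSucc) (x i.succ) / (∑ y, c (x i.castSucc) y))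
      = ∑' ℓ : ℕ, (∑ a, (if a ∈ A then (1:ℝ) else 0) * ∑ y, c a y * statV c A B ℓ y)
          / (∑ z, ∑ y, c z y) := tsum_congr (fun ℓ => step_sum hpos ℓ)
    _ = (∑' ℓ : ℕ, ∑ a, (if a ∈ A then (1:ℝ) else 0) * ∑ y, c a y * statV c A B ℓ y)
          / (∑ z, ∑ y, c z y) := tsum_div_const
    _ = (∑ a, ∑' ℓ : ℕ, (if a ∈ A then (1:ℝ) else 0) * ∑ y, c a y * statV c A B ℓ y)
          / (∑ z, ∑ y, c z y) := by
        rw [Summable.tsum_finsetSum (fun a _ => (hsumin a).mul_left _)]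
    _ = (∑ a, (if a ∈ A then (1:ℝ) else 0) * ∑ y, c a y * hitP c A B y)
          / (∑ z, ∑ y, c z y) := by
        congr 1
        apply Finset.sum_congr rfl; intro a _
        rw [tsum_mul_left]
        congr 1
        rw [Summable.tsum_finsetSum (fun y _ => (hsummy y).mul_left (c a y))]
        apply Finset.sum_congr rfl; intro y _
        rw [tsum_mul_left]
        rfl
    _ = dirichlet c (fful c A B) / (∑ z, ∑ y, c z y) := by
        rw [dirichlet_fful hsym hnn hpos hAB]
    _ = effCond c A B / (∑ z, ∑ y, c z y) := by
        rw [effCond_eq_fful hsym hnn hpos hAB]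

end StatAux

open Classical in
/-- For the stationary Markov chain of a finite weighted graph,
the probability of starting in `A` and visiting `B` before returning to `A`
equals `C_eff(A,B)/C`, where `C` is the total conductance `Σ_x c(x)`. -/
theorem stationary_escape_probability
    {V : Type*} [Fintype V] (c : V → V → ℝ)
    (hsym : ∀ x y, c x y = c y x) (hnn : ∀ x y, 0 ≤ c x y)
    (hpos : ∀ x, 0 < ∑ y, c x y)
    (A B : Set V) (hA : A.Nonempty) (hB : B.Nonempty) (hAB : Disjoint A B) :
    (∑' ℓ : ℕ, ∑ x : Fin (ℓ + 2) → V,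
        (if x 0 ∈ A
            ∧ (∀ j : Fin (ℓ + 2), 0 < (j : ℕ) → (j : ℕ) < ℓ + 1 → x j ∉ A ∧ x j ∉ B)
            ∧ x (Fin.last (ℓ + 1)) ∈ B
          then (1 : ℝ) else 0) *
          ((∑ y, c (x 0) y) / (∑ z, ∑ y, c z y)) *
          ∏ i : Fin (ℓ + 1), c (x i.castSucc) (x i.succ) / (∑ y, c (x i.castSucc) y))
      = effCond c A B / (∑ z, ∑ y, c z y) :=
  stationary_escape_prob_aux hsym hnn hpos A B hA hB hAB

end Paper
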